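/- Let f(x) = x^{2g+1} - b·x - (p·c)/4 ∈ ℚ[x] be a Mori trinomial. Then f(x) is irreducible over the field ℚ₂ of 2-adic numbers, and hence irreducible over ℚ. Moreover, the splitting field extension ℚ(R_f)/ℚ (where R_f is the set of roots of f) is ramified at the prime 2. -/

import Mathlib

open Polynomial NumberField

noncomputable section

/-- `(g,p,b,c)` is a Mori quadruple: `g` is a positive integer, `p` an odd prime such that
every prime divisor of `g` divides `(p-1)/2`, `b mod p` is a primitive root of `𝔽_p`,
`c` is odd, and `gcd(b,c) = gcd(b,2g+1) = gcd(c,g) = 1`. -/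
def IsMoriQuadruple (g p : ℕ) (b c : ℤ) : Prop :=
  0 < g ∧ p.Prime ∧ Odd p ∧
    (∀ q : ℕ, q.Prime → q ∣ g → q ∣ (p - 1) / 2) ∧
    orderOf (b : ZMod p) = p - 1 ∧
    Odd c ∧ IsCoprime b c ∧ IsCoprime b (2 * (g : ℤ) + 1) ∧ IsCoprime c (g : ℤ)

/-- The Mori trinomial `f(x) = x^(2g+1) - b·x - (p·c)/4 ∈ ℚ[x]`. -/
def moriPoly (g p : ℕ) (b c : ℤ) : ℚ[X] :=
  X ^ (2 * g + 1) - C (b : ℚ) * X - C ((p : ℚ) * (c : ℚ) / 4)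

lemma val_root_pow {L Γ : Type*} [Field L] [LinearOrderedCommGroupWithZero Γ]
    (v : Valuation L Γ) {α B C : L} {n : ℕ} (hn : 2 ≤ n)
    (heq : α ^ n = B * α + C) (hB : v B ≤ 1) (hC : 1 < v C) :
    1 < v α ∧ v α ^ n = v C := by
  have hα : 1 < v α := by
    by_contra hle
    push_neg at hle
    have h1 : v (B * α) ≤ 1 := by
      rw [v.map_mul]
      calc v B * v α ≤ 1 * 1 := mul_le_mul' hB hle
        _ = 1 := mul_one 1
    have h2 : v (B * α + C) = v C := v.map_add_eq_of_lt_right (lt_of_le_of_lt h1 hC)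
    have h3 : v (α ^ n) ≤ 1 := by rw [v.map_pow]; exact pow_le_one' hle n
    rw [heq, h2] at h3
    exact absurd h3 hC.not_ge
  have hα0 : (0:Γ) < v α := lt_trans zero_lt_one hα
  have hBα : v (B * α) < v α ^ n := by
    have h1 : v (B * α) ≤ v α := by
      rw [v.map_mul]
      calc v B * v α ≤ 1 * v α := mul_le_mul_left hB _
        _ = v α := one_mul _
    have h2 : v α < v α ^ n := by
      calc v α = v α ^ 1 := (pow_one _).symm
        _ < v α ^ n := pow_lt_pow_right₀ hα (by omega)
    exact lt_of_le_of_lt h1 h2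
  have hCeq : C = α ^ n - B * α := by rw [heq]; ring
  refine ⟨hα, ?_⟩
  rw [hCeq, Valuation.map_sub_eq_of_lt_left _ (by rw [v.map_pow]; exact hBα), v.map_pow]
noncomputable section

lemma moriPoly_eq (g p : ℕ) (b c : ℤ) :
    moriPoly g p b c = X ^ (2*g+1) - (C (b:ℚ) * X + C ((p : ℚ) * (c : ℚ) / 4)) := by
  rw [moriPoly]; ring

lemma moriPoly_lin_degree (g p : ℕ) (b c : ℤ) (hg : 0 < g) :
    (C (b:ℚ) * X + C ((p : ℚ) * (c : ℚ) / 4)).degree < ((2*g+1 : ℕ) : WithBot ℕ) :=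
  by
  have h : (1:ℕ) < 2*g+1 := by omega
  exact lt_of_le_of_lt degree_linear_le (by exact_mod_cast h)

lemma moriPoly_monic (g p : ℕ) (b c : ℤ) (hg : 0 < g) : (moriPoly g p b c).Monic := by
  rw [moriPoly_eq]
  exact monic_X_pow_sub (moriPoly_lin_degree g p b c hg)

lemma moriPoly_degree (g p : ℕ) (b c : ℤ) (hg : 0 < g) :
    (moriPoly g p b c).degree = ((2*g+1 : ℕ) : WithBot ℕ) := by
  rw [moriPoly_eq, degree_sub_eq_left_of_degree_lt, degree_X_pow]
  rw [degree_X_pow]; exact moriPoly_lin_degree g p b c hg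

lemma moriPoly_natDegree (g p : ℕ) (b c : ℤ) (hg : 0 < g) : (moriPoly g p b c).natDegree = 2*g+1 :=
  natDegree_eq_of_degree_eq_some (moriPoly_degree g p b c hg)

lemma mori_eval₂ {S : Type*} [CommRing S] (g p : ℕ) (b c : ℤ) (ψ : ℚ →+* S) (a : S) :
    eval₂ ψ a (moriPoly g p b c) = a ^ (2*g+1) - (b : S) * a - ψ ((p : ℚ) * (c : ℚ) / 4) := by
  simp only [moriPoly, eval₂_sub, eval₂_mul, eval₂_pow, eval₂_X, eval₂_C]
  rw [map_intCast]

lemma mori_coeff_zero (g p : ℕ) (b c : ℤ) :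
    (moriPoly g p b c).coeff 0 = -((p : ℚ) * (c : ℚ) / 4) := by
  simp [moriPoly, coeff_X_pow]

lemma odd_isUnit_padic (m : ℤ) (hm : Odd m) : IsUnit (m : ℤ_[2]) := by
  rw [PadicInt.isUnit_iff]
  refine le_antisymm (PadicInt.norm_le_one _) ?_
  rcases lt_or_eq_of_le (PadicInt.norm_le_one (m : ℤ_[2])) with hlt | heq
  · exfalso
    have h2 : (2:ℤ) ∣ m := (PadicInt.norm_int_lt_one_iff_dvd m).1 hlt
    have := Int.odd_iff.1 hm
    omega
  · exact le_of_eq heq.symm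

lemma not_isUnit_two_padic : ¬ IsUnit (2 : ℤ_[2]) := by
  rw [PadicInt.isUnit_iff]
  have h : ‖(2 : ℤ_[2])‖ = (2:ℝ)⁻¹ := by
    have := PadicInt.norm_p (p := 2)
    simpa using this
  rw [h]; norm_num

lemma mori_factor_natDegree (g p : ℕ) (b c : ℤ) (hg : 0 < g) (hp : Odd (p:ℤ))
    (hpne : p ≠ 0) (hc : Odd c)
    {q : ℚ_[2][X]} (hqm : q.Monic) (hqi : Irreducible q)
    (hqd : q ∣ (moriPoly g p b c).map (algebraMap ℚ ℚ_[2])) :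
    q.natDegree = 2*g+1 := by
  set n := 2*g+1 with hn
  set F := (moriPoly g p b c).map (algebraMap ℚ ℚ_[2]) with hF
  have hFm : F.Monic := (moriPoly_monic g p b c hg).map _
  have hFne : F ≠ 0 := hFm.ne_zero
  have hFdeg : F.natDegree = n := by
    rw [hF, (moriPoly_monic g p b c hg).natDegree_map, moriPoly_natDegree g p b c hg]
  set L := q.SplittingField with hL
  set φ : ℚ_[2] →+* L := algebraMap ℚ_[2] L with hφ
  set j : ℤ_[2] →+* L := φ.comp (PadicInt.Coe.ringHom) with hj
  obtain ⟨A, hmem, hloc⟩ := IsLocalRing.exists_factor_valuationRing j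
  set v := A.valuation with hv
  set t := v (φ 2) with htdef
  have hj2 : φ 2 = j 2 := by
    have h22 : PadicInt.Coe.ringHom (2 : ℤ_[2]) = (2 : ℚ_[2]) := map_ofNat _ 2
    rw [hj, RingHom.comp_apply, h22]
  have hjinj : Function.Injective j := by
    rw [hj, RingHom.coe_comp]
    exact φ.injective.comp (fun x y hxy => Subtype.ext hxy)
  have hj1 : ∀ x : ℤ_[2], v (j x) ≤ 1 := fun x => (A.valuation_le_one_iff _).2 (hmem x)
  have hju : ∀ x : ℤ_[2], IsUnit x → v (j x) = 1 := by
    intro x hx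
    refine le_antisymm (hj1 x) ?_
    have h1 : v (j x) * v (j ((hx.unit⁻¹ : ℤ_[2]ˣ) : ℤ_[2])) = 1 := by
      rw [← v.map_mul, ← j.map_mul, hx.mul_val_inv, j.map_one, v.map_one]
    calc (1:A.ValueGroup) = v (j x) * v (j ((hx.unit⁻¹ : ℤ_[2]ˣ) : ℤ_[2])) := h1.symm
      _ ≤ v (j x) * 1 := mul_le_mul_right (hj1 _) _
      _ = v (j x) := mul_one _
  have ht0 : t ≠ 0 := by
    rw [htdef, Valuation.ne_zero_iff]
    exact fun h => two_ne_zero (φ.injective (h.trans (map_zero φ).symm))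
  have ht0' : (0 : A.ValueGroup) < t := zero_lt_iff.2 ht0
  have ht1 : t < 1 := by
    refine lt_of_le_of_ne (by rw [htdef, hj2]; exact hj1 2) ?_
    intro heq
    apply not_isUnit_two_padic
    have h2ne : j 2 ≠ 0 := by
      intro h; exact two_ne_zero (hjinj (h.trans (map_zero j).symm))
    have hinvmem : (j 2)⁻¹ ∈ A := by
      rw [← A.valuation_le_one_iff, map_inv₀, ← hv, ← hj2, ← htdef, heq, inv_one]
    have hunit : IsUnit (j.codRestrict A.toSubring hmem 2) := by
      refine isUnit_iff_exists_inv.2 ⟨⟨(j 2)⁻¹, hinvmem⟩, ?_⟩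
      exact Subtype.ext (mul_inv_cancel₀ h2ne)
    exact hloc.map_nonunit _ hunit
  have hvq : ∀ z : ℚ_[2], z ≠ 0 → v (φ z) = t ^ z.valuation := by
    intro z hz
    set k := z.valuation with hk
    have h2k : ((2:ℚ_[2]))^k ≠ 0 := zpow_ne_zero k two_ne_zero
    have hnorm : ‖z / (2:ℚ_[2])^k‖ = 1 := by
      have hn2 : ‖(2:ℚ_[2])‖ = (2:ℝ)⁻¹ := by
        have := Padic.norm_p (p := 2); simpa using this
      rw [norm_div, norm_zpow, hn2, Padic.norm_eq_zpow_neg_valuation hz, ← hk]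
      rw [inv_zpow, ← zpow_neg]
      exact div_self (zpow_ne_zero _ two_ne_zero)
    set U : ℤ_[2] := ⟨z / (2:ℚ_[2])^k, hnorm.le⟩ with hU
    have hUunit : IsUnit U := PadicInt.isUnit_iff.2 hnorm
    have hzeq : z = (U : ℚ_[2]) * (2:ℚ_[2])^k := by
      rw [hU]
      show z = (z / (2:ℚ_[2])^k) * (2:ℚ_[2])^k
      field_simp
    rw [hzeq, map_mul, v.map_mul, map_zpow₀, map_zpow₀]
    have : φ (U : ℚ_[2]) = j U := rfl
    rw [this, hju U hUunit, one_mul, ← htdef]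
  -- roots of q in L
  set d := q.natDegree with hd
  have hd0 : 0 < d := hqi.natDegree_pos
  have hsp : Splits (q.map φ) := SplittingField.splits q
  have hcard : Multiset.card (q.map φ).roots = d := by rw [← hsp.natDegree_eq_card_roots, natDegree_map]
  have hprod : q.map φ = ((q.map φ).roots.map fun a => X - C a).prod :=
    hsp.eq_prod_roots_of_monic (hqm.map φ)
  set q0 := q.coeff 0 with hq0
  have hq0ne : q0 ≠ 0 := by
    intro h0
    have hXq : X ∣ q := X_dvd_iff.2 h0
    have hXF : X ∣ F := hXq.trans hqd
    have : F.coeff 0 = 0 := X_dvd_iff.1 hXF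
    rw [hF, coeff_map, mori_coeff_zero] at this
    have hne : -((p : ℚ) * (c : ℚ) / 4) ≠ 0 := by
      have hcne : (c:ℚ) ≠ 0 := Int.cast_ne_zero.2 (by rintro rfl; simp at hc)
      have hpne' : (p:ℚ) ≠ 0 := Nat.cast_ne_zero.2 hpne
      simp [hcne, hpne']
    exact hne (by exact_mod_cast (map_eq_zero_iff _ (algebraMap ℚ ℚ_[2]).injective).1 this)
  have heval0 : φ q0 = ((q.map φ).roots.map fun a => -a).prod := by
    have h1 : φ q0 = (q.map φ).coeff 0 := (coeff_map φ 0).symm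
    rw [h1, coeff_zero_eq_eval_zero]
    conv_lhs => rw [hprod]
    rw [eval_multiset_prod, Multiset.map_map]
    congr 1
    apply Multiset.map_congr rfl
    intro a _
    simp
  -- each root
  have hroot : ∀ a ∈ (q.map φ).roots, 1 < v a ∧ v a ^ n = t ^ (-2:ℤ) := by
    intro a ha
    have hIsRoot : IsRoot (q.map φ) a := (mem_roots'.1 ha).2
    obtain ⟨r, hr⟩ := hqd
    have hevF : eval₂ φ a F = 0 := by
      rw [hr, eval₂_mul]
      rw [show eval₂ φ a q = 0 from by rwa [eval₂_eq_eval_map]]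
      ring
    have heq : eval₂ (φ.comp (algebraMap ℚ ℚ_[2])) a (moriPoly g p b c) = 0 := by
      rw [← eval₂_map]; exact hevF
    rw [mori_eval₂] at heq
    set ψ := φ.comp (algebraMap ℚ ℚ_[2]) with hψ
    have heq2 : a ^ n = (b:L) * a + ψ ((p:ℚ)*(c:ℚ)/4) := by
      rw [← sub_eq_zero]; rw [← heq]; ring
    have hB : v ((b:L)) ≤ 1 := by
      have hb : ((b:ℤ):L) = j ((b:ℤ):ℤ_[2]) := (map_intCast j b).symm
      rw [hb]; exact hj1 _
    have hCval : v (ψ ((p:ℚ)*(c:ℚ)/4)) = t ^ (-2:ℤ) := by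
      have hsplit : ((p:ℚ)*(c:ℚ)/4 : ℚ) = (p:ℚ) * (c:ℚ) / 4 := rfl
      rw [map_div₀, map_mul, map_div₀ v, v.map_mul]
      have hp' : ψ ((p:ℕ):ℚ) = j ((p:ℕ):ℤ_[2]) := by
        rw [map_natCast, map_natCast]
      have hc' : ψ ((c:ℤ):ℚ) = j ((c:ℤ):ℤ_[2]) := by
        rw [map_intCast, map_intCast]
      rw [hp', hc', hju _ (by exact_mod_cast odd_isUnit_padic p hp),
        hju _ (odd_isUnit_padic c hc), one_mul]
      have h4 : ψ (4:ℚ) = (φ 2)^2 := by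
        rw [show (4:ℚ) = 2^2 by norm_num, map_pow]
        congr 1
      rw [h4, v.map_pow, ← htdef, one_div, zpow_neg]
      congr 1
    have hC1 : 1 < v (ψ ((p:ℚ)*(c:ℚ)/4)) := by
      rw [hCval]
      exact one_lt_zpow_of_neg₀ ht0' ht1 (by norm_num)
    have := val_root_pow v (show 2 ≤ n by omega) heq2 hB hC1
    rw [hCval] at this
    exact this
  -- product over roots
  have hvq0 : v (φ q0) = t ^ q0.valuation := hvq q0 hq0ne
  have hprodval : v (φ q0) = ((q.map φ).roots.map fun a => v a).prod := by
    rw [heval0, map_multiset_prod v, Multiset.map_map]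
    congr 1
    apply Multiset.map_congr rfl
    intro a _
    exact v.map_neg a
  have hpow : (v (φ q0)) ^ n = t ^ (-2 * (d:ℤ)) := by
    rw [hprodval, ← Multiset.prod_map_pow]
    rw [Multiset.map_congr rfl (fun a ha => (hroot a ha).2)]
    rw [Multiset.map_const', hcard, Multiset.prod_replicate]
    rw [← zpow_natCast (t ^ (-2:ℤ)), ← zpow_mul]
  have hZ : q0.valuation * n = -2 * d := by
    apply zpow_right_injective₀ ht0' (ne_of_lt ht1)
    show t ^ (q0.valuation * (n:ℤ)) = t ^ (-2 * (d:ℤ))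
    calc t ^ (q0.valuation * (n:ℤ)) = (t ^ q0.valuation) ^ (n:ℤ) := by rw [← zpow_mul]
      _ = (v (φ q0)) ^ (n:ℤ) := by rw [hvq0]
      _ = (v (φ q0)) ^ (n:ℕ) := by rw [zpow_natCast]
      _ = t ^ (-2 * (d:ℤ)) := hpow
  have h2d : (n:ℤ) ∣ 2*(d:ℤ) := ⟨-q0.valuation, by linarith⟩
  have hnat : n ∣ 2*d := by
    have : (n:ℤ) ∣ ((2*d : ℕ):ℤ) := by push_cast; exact h2d
    exact_mod_cast this
  have hcop : Nat.Coprime n 2 := Nat.coprime_two_right.2 ⟨g, by omega⟩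
  have hnd : n ∣ d := hcop.dvd_of_dvd_mul_left hnat
  have hled : n ≤ d := Nat.le_of_dvd hd0 hnd
  have hdn : d ≤ n := hFdeg ▸ natDegree_le_of_dvd hqd hFne
  omega

lemma mori_irreducible_padic (g p : ℕ) (b c : ℤ) (hg : 0 < g) (hp : Odd (p:ℤ))
    (hpne : p ≠ 0) (hc : Odd c) :
    Irreducible ((moriPoly g p b c).map (algebraMap ℚ ℚ_[2])) := by
  classical
  set F := (moriPoly g p b c).map (algebraMap ℚ ℚ_[2]) with hF
  have hFm : F.Monic := (moriPoly_monic g p b c hg).map _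
  have hFne : F ≠ 0 := hFm.ne_zero
  have hFdeg : F.natDegree = 2*g+1 := by
    rw [hF, (moriPoly_monic g p b c hg).natDegree_map, moriPoly_natDegree g p b c hg]
  have hFnu : ¬ IsUnit F := by
    intro hu
    have := natDegree_eq_zero_of_isUnit hu
    omega
  obtain ⟨q, hq, hqd⟩ := WfDvdMonoid.exists_irreducible_factor hFnu hFne
  have hqne : q ≠ 0 := hq.ne_zero
  set q' := normalize q with hq'
  have hq'm : q'.Monic := monic_normalize hqne
  have hq'i : Irreducible q' := (associated_normalize q).symm.symm.irreducible hq
  have hq'd : q' ∣ F := ((associated_normalize q).symm.dvd).trans hqd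
  have hdeg := mori_factor_natDegree g p b c hg hp hpne hc hq'm hq'i hq'd
  obtain ⟨r, hr⟩ := hq'd
  have hrne : r ≠ 0 := by
    rintro rfl
    rw [mul_zero] at hr
    exact hFne hr
  have hsum : F.natDegree = q'.natDegree + r.natDegree := by
    rw [hr, natDegree_mul hq'i.ne_zero hrne]
  have hr0 : r.natDegree = 0 := by omega
  have hru : IsUnit r := by
    rw [isUnit_iff_degree_eq_zero, degree_eq_natDegree hrne, hr0]
    rfl
  have hassoc : Associated q' F := ⟨hru.unit, by rw [hru.unit_spec, hr]⟩
  exact hassoc.irreducible hq'i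

lemma mori_irreducible_rat (g p : ℕ) (b c : ℤ) (hg : 0 < g) (hp : Odd (p:ℤ))
    (hpne : p ≠ 0) (hc : Odd c) :
    Irreducible (moriPoly g p b c) := by
  have hirr := mori_irreducible_padic g p b c hg hp hpne hc
  have hmap : ∀ u : ℚ[X], IsUnit (u.map (algebraMap ℚ ℚ_[2])) → IsUnit u := by
    intro u hu
    have hune : u ≠ 0 := by
      rintro rfl
      rw [Polynomial.map_zero] at hu
      exact (by simp : ¬ IsUnit (0:ℚ_[2][X])) hu
    rw [isUnit_iff_degree_eq_zero] at hu ⊢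
    rwa [degree_map_eq_of_injective (algebraMap ℚ ℚ_[2]).injective] at hu
  constructor
  · intro hu
    exact hirr.not_isUnit (hu.map (mapRingHom (algebraMap ℚ ℚ_[2])))
  · intro u w huw
    have := hirr.isUnit_or_isUnit (by rw [huw, Polynomial.map_mul])
    rcases this with h | h
    · exact Or.inl (hmap u h)
    · exact Or.inr (hmap w h)

open IsDedekindDomain Multiplicative in
lemma mori_ramified (g p : ℕ) (b c : ℤ) (hg : 0 < g) (hp : Odd (p:ℤ))
    (hpne : p ≠ 0) (hc : Odd c) :
    ∃ Q : Ideal (NumberField.RingOfIntegers (moriPoly g p b c).SplittingField),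
      Q.IsMaximal ∧ (2 : NumberField.RingOfIntegers (moriPoly g p b c).SplittingField) ∈ Q ∧
      1 < Ideal.ramificationIdx'
            (Ideal.span {(2 : ℤ)}) Q := by
  classical
  set f := moriPoly g p b c with hf
  set n := 2*g+1 with hn
  set N := f.SplittingField with hN
  letI : NumberField N := ⟨⟩
  set R := NumberField.RingOfIntegers N with hR
  have hmax2 : (Ideal.span {(2:ℤ)}).IsMaximal :=
    PrincipalIdealRing.isMaximal_of_irreducible Int.prime_two.irreducible
  have hker : RingHom.ker (algebraMap ℤ R) ≤ Ideal.span {(2:ℤ)} := by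
    rw [(RingHom.injective_iff_ker_eq_bot _).1 (algebraMap ℤ R).injective_int]
    exact bot_le
  obtain ⟨Q, hQmax, hQcomap⟩ :=
    Ideal.exists_ideal_over_maximal_of_isIntegral (Ideal.span {(2:ℤ)}) hker
  have h2Q : (2 : R) ∈ Q := by
    have h1 : (2:ℤ) ∈ Ideal.comap (algebraMap ℤ R) Q := by
      rw [hQcomap]; exact Ideal.mem_span_singleton_self 2
    have h2 : algebraMap ℤ R 2 ∈ Q := h1
    rwa [map_ofNat] at h2
  have h2ne : (2 : R) ≠ 0 := two_ne_zero
  have hQbot : Q ≠ ⊥ := fun hbot => h2ne (by rwa [hbot, Ideal.mem_bot] at h2Q)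
  set W : HeightOneSpectrum R := ⟨Q, hQmax.isPrime, hQbot⟩ with hW
  set v : Valuation N (WithZero (Multiplicative ℤ)) := W.valuation N with hv
  set t := v ((2:N)) with htdef
  have h2alg : ((2:N)) = algebraMap R N (2:R) := by rw [map_ofNat]
  have ht1 : t < 1 := by
    rw [htdef, h2alg, HeightOneSpectrum.valuation_lt_one_iff_dvd, Ideal.dvd_iff_le]
    exact (Ideal.span_singleton_le_iff_mem _).2 h2Q
  have ht0 : t ≠ 0 := by
    rw [htdef, Valuation.ne_zero_iff]
    exact two_ne_zero
  -- a root of f in N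
  have hfd0 : f.degree ≠ 0 := by
    rw [hf, moriPoly_degree g p b c hg]
    intro hh
    have h0 : (2*g+1 : ℕ) = 0 := by exact_mod_cast hh
    omega
  obtain ⟨α, hα⟩ := (Polynomial.SplittingField.splits f).exists_eval_eq_zero
    (by rwa [degree_map])
  have heval : eval₂ (algebraMap ℚ N) α (moriPoly g p b c) = 0 := by rwa [eval_map] at hα
  rw [mori_eval₂] at heval
  have heq2 : α ^ n = (b:N) * α + (algebraMap ℚ N) ((p:ℚ)*(c:ℚ)/4) := by
    rw [← sub_eq_zero, hn, ← heval]; ring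
  -- values of constants
  have hvint : ∀ x : R, v (algebraMap R N x) ≤ 1 := fun x => W.valuation_le_one x
  have hvunit : ∀ m : ℤ, Odd m → v ((m:N)) = 1 := by
    intro m hm
    have hmR : ((m:N)) = algebraMap R N ((m:R)) := by push_cast; rfl
    rw [hmR]
    refine le_antisymm (hvint _) ?_
    by_contra hlt
    push_neg at hlt
    have hlt' : v (algebraMap R N ((m:R))) < 1 := lt_of_le_of_ne (hvint _) (ne_of_lt hlt)
    rw [hv, HeightOneSpectrum.valuation_lt_one_iff_dvd, Ideal.dvd_iff_le] at hlt'
    have hmQ : ((m:R)) ∈ Q := (Ideal.span_singleton_le_iff_mem _).1 hlt'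
    have hcm : (m:ℤ) ∈ Ideal.comap (algebraMap ℤ R) Q := by
      show algebraMap ℤ R m ∈ Q
      rw [eq_intCast]
      exact hmQ
    rw [hQcomap, Ideal.mem_span_singleton] at hcm
    obtain ⟨k, hk⟩ := hcm
    obtain ⟨l, hl⟩ := hm
    omega
  have hB : v ((b:N)) ≤ 1 := by
    have hbR : ((b:N)) = algebraMap R N ((b:R)) := by push_cast; rfl
    rw [hbR]; exact hvint _
  have hCval : v ((algebraMap ℚ N) ((p:ℚ)*(c:ℚ)/4)) = t ^ (-2:ℤ) := by
    rw [map_div₀, map_mul, map_div₀ v, v.map_mul]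
    have hpN : (algebraMap ℚ N) ((p:ℕ):ℚ) = ((p:ℤ):N) := by push_cast; rfl
    have hcN : (algebraMap ℚ N) ((c:ℤ):ℚ) = ((c:ℤ):N) := by push_cast; rfl
    rw [hpN, hcN, hvunit _ hp, hvunit _ hc, one_mul]
    have h4 : (algebraMap ℚ N) (4:ℚ) = ((2:N))^2 := by
      rw [show (4:ℚ) = 2^2 by norm_num, map_pow, map_ofNat]
    rw [h4, v.map_pow, ← htdef, one_div, zpow_neg]
    exact congrArg Inv.inv (by norm_cast)
  have hC1 : 1 < v ((algebraMap ℚ N) ((p:ℚ)*(c:ℚ)/4)) := by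
    rw [hCval]
    exact one_lt_zpow_of_neg₀ (zero_lt_iff.2 ht0) ht1 (by norm_num)
  obtain ⟨hαgt, hαpow⟩ := val_root_pow v (show 2 ≤ n by omega) heq2 hB hC1
  rw [hCval] at hαpow
  -- extract integers
  obtain ⟨s, hs⟩ := WithZero.ne_zero_iff_exists.1 ht0
  have hαne : v α ≠ 0 := ne_of_gt (lt_trans zero_lt_one hαgt)
  obtain ⟨m, hm⟩ := WithZero.ne_zero_iff_exists.1 hαne
  have hm1 : (1:Multiplicative ℤ) < m := by
    rw [← WithZero.coe_lt_coe, hm]; exact hαgt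
  have hs1 : s < (1:Multiplicative ℤ) := by
    rw [← WithZero.coe_lt_coe, hs]; exact ht1
  have hkey : m ^ n = s ^ (-2:ℤ) := by
    have hh : ((m:WithZero (Multiplicative ℤ))) ^ n = ((s:WithZero (Multiplicative ℤ))) ^ (-2:ℤ) := by rw [hm, hs]; exact hαpow
    rw [← WithZero.coe_pow, ← WithZero.coe_zpow] at hh
    exact_mod_cast hh
  have ha0 : (0:ℤ) < Multiplicative.toAdd m := by
    rwa [← toAdd_one (α := ℤ), Multiplicative.toAdd_lt]
  have hst : Multiplicative.toAdd s < 0 := by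
    rw [show (0:ℤ) = Multiplicative.toAdd (1:Multiplicative ℤ) from (toAdd_one).symm]
    rwa [Multiplicative.toAdd_lt]
  have hkey2 : (n:ℤ) * Multiplicative.toAdd m = -2 * Multiplicative.toAdd s := by
    have hh := congrArg Multiplicative.toAdd hkey
    rw [toAdd_pow, toAdd_zpow] at hh
    rw [nsmul_eq_mul, zsmul_eq_mul, Int.cast_id] at hh
    exact hh
  have hn3 : (3:ℤ) ≤ (n:ℤ) := by
    have : 3 ≤ n := by omega
    exact_mod_cast this
  have hsle2 : Multiplicative.toAdd s ≤ -2 := by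
    have h3 : (3:ℤ) ≤ -2 * Multiplicative.toAdd s := by
      rw [← hkey2]
      have hmul : (3:ℤ) * 1 ≤ (n:ℤ) * Multiplicative.toAdd m :=
        mul_le_mul hn3 (by omega) (by norm_num) (by linarith)
      linarith
    omega
  -- Q^2 divides (2)
  have hsdef : W.intValuation (2:R) = (s : WithZero (Multiplicative ℤ)) := by
    rw [← HeightOneSpectrum.valuation_of_algebraMap (K := N)]
    show v (algebraMap R N 2) = _
    rw [← h2alg, ← htdef]
    exact hs.symm
  have hQpow : ∀ k : ℕ, (Q ^ k ∣ Ideal.span {(2:R)}) ↔ (k:ℤ) ≤ -(Multiplicative.toAdd s) := by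
    intro k
    rw [← HeightOneSpectrum.intValuation_le_pow_iff_dvd W (2:R) k, hsdef,
      WithZero.exp, WithZero.coe_le_coe]
    rw [show s = Multiplicative.ofAdd (Multiplicative.toAdd s) from (ofAdd_toAdd s).symm,
      Multiplicative.ofAdd_le]
    simp only [toAdd_ofAdd]
    omega
  have hmaple : Ideal.map (algebraMap ℤ R) (Ideal.span {(2:ℤ)}) = Ideal.span {(2:R)} := by
    rw [Ideal.map_span, Set.image_singleton, map_ofNat]
  have hmem2 : Ideal.map (algebraMap ℤ R) (Ideal.span {(2:ℤ)}) ≤ Q ^ 2 := by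
    rw [hmaple]
    exact Ideal.le_of_dvd ((hQpow 2).2 (by omega))
  have hbdd : BddAbove {k : ℕ | Ideal.map (algebraMap ℤ R) (Ideal.span {(2:ℤ)}) ≤ Q ^ k} := by
    refine ⟨(-(Multiplicative.toAdd s)).toNat, fun k hk => ?_⟩
    have hdvd : Q ^ k ∣ Ideal.span {(2:R)} := by
      rw [Ideal.dvd_iff_le, ← hmaple]; exact hk
    have hle := (hQpow k).1 hdvd
    omega
  have h2le : 2 ≤ Ideal.ramificationIdx' (Ideal.span {(2:ℤ)}) Q := by
    rw [Ideal.ramificationIdx']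
    exact le_csSup hbdd hmem2
  exact ⟨Q, hQmax, h2Q, lt_of_lt_of_le one_lt_two h2le⟩

/-- Theorem (Mori): a Mori trinomial is irreducible over `ℚ₂`, hence over `ℚ`; moreover the
splitting field extension `ℚ(R_f)/ℚ` is ramified at the prime `2`. -/
theorem mori_trinomial_irreducible_and_ramified_at_two
    (g p : ℕ) (b c : ℤ) (h : IsMoriQuadruple g p b c) :
    Irreducible ((moriPoly g p b c).map (algebraMap ℚ ℚ_[2])) ∧
    Irreducible (moriPoly g p b c) ∧
    ∃ Q : Ideal (𝓞 (moriPoly g p b c).SplittingField), Q.IsMaximal ∧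
      (2 : 𝓞 (moriPoly g p b c).SplittingField) ∈ Q ∧
      1 < Ideal.ramificationIdx'
            (Ideal.span {(2 : ℤ)}) Q := by
  obtain ⟨hg, hpp, hpodd, -, -, hc, -, -, -⟩ := h
  have hp : Odd ((p:ℕ):ℤ) := by exact_mod_cast hpodd
  have hpne : p ≠ 0 := hpp.ne_zero
  exact ⟨mori_irreducible_padic g p b c hg hp hpne hc,
    mori_irreducible_rat g p b c hg hp hpne hc,
    mori_ramified g p b c hg hp hpne hc⟩
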